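/- arXiv:1705.05721 — 3 statements merged into one kernel-verified Lean document; each statement's English description precedes it below -/
import Mathlib

section
/- Let Ω ⊆ ℝⁿ be open, let B : Ω → GL(n,ℝ) be continuously differentiable, and let F₀ : ℝⁿ → ℝ and F : Ω × ℝⁿ → ℝ be functions satisfying F(x, B(x)ξ) = F₀(ξ) for all x ∈ Ω and ξ ∈ ℝⁿ. Let γ : [0,1] → Ω be a continuously differentiable curve and let Y : [0,1] → ℝⁿ be differentiable with Y'(t) = (d/dt)(B∘γ)(t) · B(γ(t))⁻¹ · Y(t) for all t ∈ [0,1]. Then F(γ(t), Y(t)) = F(γ(0), Y(0)) for all t ∈ [0,1]. -/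
open Matrix

noncomputable section

lemma differentiableWithinAt_matrix_det {n : ℕ} {A : ℝ → Matrix (Fin n) (Fin n) ℝ}
    {s : Set ℝ} {t : ℝ}
    (h : ∀ i j, DifferentiableWithinAt ℝ (fun x => A x i j) s t) :
    DifferentiableWithinAt ℝ (fun x => (A x).det) s t := by
  simp only [Matrix.det_apply']
  refine DifferentiableWithinAt.fun_sum fun σ _ => DifferentiableWithinAt.const_mul ?_ _
  exact (HasDerivWithinAt.fun_finsetProd fun i _ =>
    (h (σ i) i).hasDerivWithinAt).differentiableWithinAt

lemma differentiableWithinAt_matrix_adjugate {n : ℕ} {A : ℝ → Matrix (Fin n) (Fin n) ℝ}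
    {s : Set ℝ} {t : ℝ}
    (h : ∀ i j, DifferentiableWithinAt ℝ (fun x => A x i j) s t) (i j : Fin n) :
    DifferentiableWithinAt ℝ (fun x => (A x).adjugate i j) s t := by
  simp only [Matrix.adjugate_apply]
  refine differentiableWithinAt_matrix_det fun k l => ?_
  rcases eq_or_ne k j with hk | hk
  · simpa [Matrix.updateRow_apply, hk] using differentiableWithinAt_const _
  · simpa [Matrix.updateRow_apply, hk] using h k l

/-- parallel transport for the connection with Christoffel symbols
`Γᵢ = −(∂ᵢB)B⁻¹` preserves the Finsler function. In local coordinates: if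
`F(x, B(x)ξ) = F₀(ξ)`, `γ : [0,1] → Ω` is a C¹ curve and `Y` solves the linear ODE
`Y'(t) = (d/dt)(B∘γ)(t) · B(γ(t))⁻¹ · Y(t)` on `[0,1]`, then `F(γ(t), Y(t))` is
constant. Here `M t` denotes the derivative of `t ↦ B(γ(t))`. -/
theorem parallel_transport_preserves_finsler
    (n : ℕ) (Ω : Set (EuclideanSpace ℝ (Fin n))) (hΩ : IsOpen Ω)
    (B : EuclideanSpace ℝ (Fin n) → Matrix (Fin n) (Fin n) ℝ)
    (hBsmooth : ∀ i j, ContDiffOn ℝ 1 (fun x => B x i j) Ω)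
    (hBinv : ∀ x ∈ Ω, IsUnit (B x))
    (F₀ : EuclideanSpace ℝ (Fin n) → ℝ)
    (F : EuclideanSpace ℝ (Fin n) → EuclideanSpace ℝ (Fin n) → ℝ)
    (hFB : ∀ x ∈ Ω, ∀ ξ : EuclideanSpace ℝ (Fin n), F x (WithLp.toLp 2 ((B x).mulVec ξ)) = F₀ ξ)
    (γ : ℝ → EuclideanSpace ℝ (Fin n))
    (hγ : ContDiffOn ℝ 1 γ (Set.Icc 0 1))
    (hγΩ : ∀ t ∈ Set.Icc (0 : ℝ) 1, γ t ∈ Ω)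
    (M : ℝ → Matrix (Fin n) (Fin n) ℝ)
    (hM : ∀ t ∈ Set.Icc (0 : ℝ) 1, ∀ i j,
      HasDerivWithinAt (fun s => B (γ s) i j) (M t i j) (Set.Icc 0 1) t)
    (Y : ℝ → EuclideanSpace ℝ (Fin n))
    (hY : ∀ t ∈ Set.Icc (0 : ℝ) 1,
      HasDerivWithinAt Y
        ((WithLp.toLp 2 ((M t * (B (γ t))⁻¹).mulVec (Y t)) : EuclideanSpace ℝ (Fin n)))
        (Set.Icc 0 1) t) :
    ∀ t ∈ Set.Icc (0 : ℝ) 1, F (γ t) (Y t) = F (γ 0) (Y 0) := by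
  set I : Set ℝ := Set.Icc 0 1 with hI
  set A : ℝ → Matrix (Fin n) (Fin n) ℝ := fun s => B (γ s) with hA
  set g : ℝ → Matrix (Fin n) (Fin n) ℝ := fun s => (A s)⁻¹ with hg
  have hdet : ∀ s ∈ I, IsUnit (A s).det := fun s hs =>
    (Matrix.isUnit_iff_isUnit_det _).1 (hBinv _ (hγΩ s hs))
  have hgA : ∀ s ∈ I, g s * A s = 1 := fun s hs => Matrix.nonsing_inv_mul _ (hdet s hs)
  have hAg : ∀ s ∈ I, A s * g s = 1 := fun s hs => Matrix.mul_nonsing_inv _ (hdet s hs)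
  have hAdiff : ∀ t ∈ I, ∀ i j, DifferentiableWithinAt ℝ (fun s => A s i j) I t :=
    fun t ht i j => (hM t ht i j).differentiableWithinAt
  -- entries of g are differentiable
  have hgdiff : ∀ t ∈ I, ∀ i j, DifferentiableWithinAt ℝ (fun s => g s i j) I t := by
    intro t ht i j
    have hkey : ∀ s, g s i j = ((A s).det)⁻¹ * (A s).adjugate i j := by
      intro s
      rw [hg]
      simp [Matrix.inv_def, Ring.inverse_eq_inv', Matrix.smul_apply, smul_eq_mul]
    simp only [hkey]
    exact ((differentiableWithinAt_matrix_det (hAdiff t ht)).inv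
      (hdet t ht).ne_zero).mul (differentiableWithinAt_matrix_adjugate (hAdiff t ht) i j)
  set D : ℝ → Matrix (Fin n) (Fin n) ℝ :=
    fun t => Matrix.of fun i j => derivWithin (fun s => g s i j) I t with hD
  have hDd : ∀ t ∈ I, ∀ i j, HasDerivWithinAt (fun s => g s i j) (D t i j) I t :=
    fun t ht i j => (hgdiff t ht i j).hasDerivWithinAt
  have huniq : UniqueDiffOn ℝ I := uniqueDiffOn_Icc zero_lt_one
  -- the derivative of the inverse
  have hDval : ∀ t ∈ I, D t = -(g t * M t * g t) := by
    intro t ht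
    have h1 : D t * A t + g t * M t = 0 := by
      ext i j
      have hconst : HasDerivWithinAt (fun s => ∑ k, g s i k * A s k j) 0 I t := by
        have heq : ∀ s ∈ I, ∑ k, g s i k * A s k j = (1 : Matrix (Fin n) (Fin n) ℝ) i j := by
          intro s hs
          rw [← Matrix.mul_apply, hgA s hs]
        exact (hasDerivWithinAt_const t I _).congr heq (heq t ht)
      have hderiv : HasDerivWithinAt (fun s => ∑ k, g s i k * A s k j)
          (∑ k, (D t i k * A t k j + g t i k * M t k j)) I t :=
        HasDerivWithinAt.fun_sum fun k _ => (hDd t ht i k).mul (hM t ht k j)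
      have h0 := hconst.derivWithin (huniq t ht)
      have h1 := hderiv.derivWithin (huniq t ht)
      rw [h0] at h1
      simp only [Matrix.add_apply, Matrix.mul_apply, Matrix.zero_apply]
      rw [← Finset.sum_add_distrib]
      exact h1.symm
    have h2 : D t * A t = -(g t * M t) := eq_neg_of_add_eq_zero_left h1
    calc D t = D t * (A t * g t) := by rw [hAg t ht, mul_one]
      _ = (D t * A t) * g t := by rw [Matrix.mul_assoc]
      _ = -(g t * M t) * g t := by rw [h2]
      _ = -(g t * M t * g t) := by rw [neg_mul]
  -- the transported vector in the reference frame
  set ξ : ℝ → (Fin n → ℝ) := fun s => (g s).mulVec (Y s) with hξ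
  have hξd : ∀ t ∈ I, HasDerivWithinAt ξ 0 I t := by
    intro t ht
    rw [hasDerivWithinAt_pi]
    intro i
    have hYj : ∀ j, HasDerivWithinAt (fun s => Y s j)
        ((M t * g t).mulVec (Y t) j) I t := by
      intro j
      exact (EuclideanSpace.proj j : EuclideanSpace ℝ (Fin n) →L[ℝ] ℝ).hasFDerivAt.comp_hasDerivWithinAt
        t (hY t ht)
    have hsum : HasDerivWithinAt (fun s => ∑ j, g s i j * Y s j)
        (∑ j, (D t i j * Y t j + g t i j * (M t * g t).mulVec (Y t) j)) I t :=
      HasDerivWithinAt.fun_sum fun j _ => (hDd t ht i j).mul (hYj j)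
    have hzero : (∑ j, (D t i j * Y t j + g t i j * (M t * g t).mulVec (Y t) j)) = 0 := by
      rw [Finset.sum_add_distrib]
      have e1 : (∑ j, D t i j * Y t j) = (D t).mulVec (Y t) i := rfl
      have e2 : (∑ j, g t i j * (M t * g t).mulVec (Y t) j)
          = (g t * (M t * g t)).mulVec (Y t) i := by
        show ((g t).mulVec ((M t * g t).mulVec (Y t))) i = _
        rw [Matrix.mulVec_mulVec]
      rw [e1, e2, hDval t ht, ← Matrix.mul_assoc]
      simp [Matrix.neg_mulVec]
    have : HasDerivWithinAt (fun s => ∑ j, g s i j * Y s j) 0 I t := hzero ▸ hsum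
    exact this
  have hcont : ContinuousOn ξ I := fun s hs => ((hξd s hs).continuousWithinAt)
  have hconst : ∀ s ∈ I, ξ s = ξ 0 := by
    intro s hs
    refine constant_of_has_deriv_right_zero hcont (fun x hx => ?_) s hs
    exact (hξd x ⟨hx.1, hx.2.le⟩).mono_of_mem_nhdsWithin (Icc_mem_nhdsGE_of_mem hx)
  intro t ht
  have hYt : ∀ s ∈ I, Y s = (A s).mulVec (ξ s) := by
    intro s hs
    show Y s = (A s).mulVec ((g s).mulVec (Y s))
    rw [Matrix.mulVec_mulVec, hAg s hs, Matrix.one_mulVec]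
  have h01 : (0 : ℝ) ∈ I := Set.left_mem_Icc.2 zero_le_one
  calc F (γ t) (Y t) = F (γ t) (WithLp.toLp 2 ((A t).mulVec (ξ t))) := by rw [← hYt t ht, WithLp.toLp_ofLp]
    _ = F₀ (WithLp.toLp 2 (ξ t)) := hFB (γ t) (hγΩ t ht) (WithLp.toLp 2 (ξ t))
    _ = F₀ (WithLp.toLp 2 (ξ 0)) := by rw [hconst t ht]
    _ = F (γ 0) (WithLp.toLp 2 ((A 0).mulVec (ξ 0))) := (hFB (γ 0) (hγΩ 0 h01) (WithLp.toLp 2 (ξ 0))).symm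
    _ = F (γ 0) (Y 0) := by rw [← hYt 0 h01, WithLp.toLp_ofLp]
end
end

section
/- Let v ∈ ℝⁿ satisfy ‖v‖ < 1 for the Euclidean norm, and let K = v + B̄(0,1) be the translate by v of the closed Euclidean unit ball. Then the Minkowski functional (gauge) of K satisfies, for every ξ ∈ ℝⁿ, gauge(K)(ξ) = (√(⟨v,ξ⟩² + (1−‖v‖²)‖ξ‖²) − ⟨v,ξ⟩) / (1−‖v‖²), where ⟨·,·⟩ is the Euclidean inner product. -/
open scoped RealInnerProductSpace Pointwise

noncomputable section

private lemma mem_smul_transball {E : Type*} [NormedAddCommGroup E] [NormedSpace ℝ E]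
    (v ξ : E) {t : ℝ} (ht : 0 < t) :
    ξ ∈ t • (v +ᵥ Metric.closedBall (0 : E) 1) ↔ ‖ξ - t • v‖ ≤ t := by
  rw [Set.mem_smul_set_iff_inv_smul_mem₀ ht.ne', Set.mem_vadd_set_iff_neg_vadd_mem,
    vadd_eq_add, mem_closedBall_zero_iff]
  have h : -v + t⁻¹ • ξ = t⁻¹ • (ξ - t • v) := by
    rw [smul_sub, smul_smul, inv_mul_cancel₀ ht.ne', one_smul]; abel
  rw [h, norm_smul, norm_inv, Real.norm_eq_abs, abs_of_pos ht]
  rw [inv_mul_le_iff₀ ht, mul_one]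

/-- explicit formula for the Minkowski functional (gauge) of the unit ball
of a Randers-type norm, i.e. of the translate `v + B̄(0,1)` of the closed Euclidean unit
ball by a vector `v` with `‖v‖ < 1`. -/
theorem gauge_translated_ball_formula
    (n : ℕ) (v : EuclideanSpace ℝ (Fin n)) (hv : ‖v‖ < 1) :
    ∀ ξ : EuclideanSpace ℝ (Fin n),
      gauge (v +ᵥ Metric.closedBall (0 : EuclideanSpace ℝ (Fin n)) 1) ξ =
        (Real.sqrt (⟪v, ξ⟫ ^ 2 + (1 - ‖v‖ ^ 2) * ‖ξ‖ ^ 2) - ⟪v, ξ⟫) /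
          (1 - ‖v‖ ^ 2) := by
  intro ξ
  have hD : 0 < 1 - ‖v‖ ^ 2 := by nlinarith [norm_nonneg v]
  set D := 1 - ‖v‖ ^ 2 with hDdef
  set b := (⟪v, ξ⟫ : ℝ) with hb
  set s := Real.sqrt (b ^ 2 + D * ‖ξ‖ ^ 2) with hs
  have hs0 : 0 ≤ s := Real.sqrt_nonneg _
  have hs2 : s ^ 2 = b ^ 2 + D * ‖ξ‖ ^ 2 := by
    rw [hs, Real.sq_sqrt]; nlinarith [sq_nonneg ‖ξ‖, sq_nonneg b]
  have hsb : -b ≤ s := by nlinarith [sq_nonneg (s + b), sq_nonneg ‖ξ‖]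
  set F := (s - b) / D with hF
  have hsb' : b ≤ s := by nlinarith [sq_nonneg ‖ξ‖, sq_nonneg (s - b), sq_nonneg (s + b)]
  have hF0 : 0 ≤ F := div_nonneg (by linarith) hD.le
  -- key quadratic identity: D * F^2 + 2 * b * F = ‖ξ‖^2
  have hFq : D * F ^ 2 + 2 * b * F = ‖ξ‖ ^ 2 := by
    rw [hF]; field_simp; nlinarith [hs2]
  by_cases hξ : ξ = 0
  · subst hξ
    have : b = 0 := by simp [hb]
    rw [gauge_zero, hF, this]
    simp [hs, this]
  · have hξn : 0 < ‖ξ‖ := norm_pos_iff.2 hξ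
    have hFpos : 0 < F := lt_of_le_of_ne hF0 (by
      intro h
      rw [← h] at hFq
      nlinarith)
    -- norm expansion at parameter t
    have hnorm : ∀ t : ℝ, ‖ξ - t • v‖ ^ 2 = ‖ξ‖ ^ 2 - 2 * b * t + t ^ 2 * ‖v‖ ^ 2 := by
      intro t
      rw [norm_sub_sq_real, real_inner_smul_right, norm_smul, Real.norm_eq_abs,
        mul_pow, sq_abs]
      rw [hb, real_inner_comm ξ v]
      ring
    apply le_antisymm
    · apply gauge_le_of_mem hF0
      rw [mem_smul_transball v ξ hFpos]
      have h1 : ‖ξ - F • v‖ ^ 2 ≤ F ^ 2 := by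
        rw [hnorm F]; nlinarith [hFq]
      nlinarith [norm_nonneg (ξ - F • v)]
    · rw [gauge_def]
      apply le_csInf ⟨F, Set.mem_sep hFpos (by
        rw [mem_smul_transball v ξ hFpos]
        have h1 : ‖ξ - F • v‖ ^ 2 ≤ F ^ 2 := by rw [hnorm F]; nlinarith [hFq]
        nlinarith [norm_nonneg (ξ - F • v)])⟩
      rintro t ⟨ht, hmem⟩
      rw [mem_smul_transball v ξ ht] at hmem
      have hq : D * t ^ 2 + 2 * b * t ≥ ‖ξ‖ ^ 2 := by
        have := hnorm t
        nlinarith [norm_nonneg (ξ - t • v)]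
      -- (D t + b)^2 ≥ s^2, D t + b ≥ 0 ⇒ D t + b ≥ s ⇒ t ≥ F
      have ht' : (0:ℝ) < t := ht
      have h1 : s ^ 2 ≤ (D * t + b) ^ 2 := by
        nlinarith [mul_nonneg hD.le (by linarith : (0:ℝ) ≤ D * t ^ 2 + 2 * b * t - ‖ξ‖ ^ 2)]
      have h3 : s ≤ |D * t + b| := by
        have h4 := Real.sqrt_le_sqrt h1
        rwa [Real.sqrt_sq hs0, Real.sqrt_sq_eq_abs] at h4
      have hkey : s ≤ D * t + b := by
        rcases abs_cases (D * t + b) with ⟨he, _⟩ | ⟨he, hneg⟩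
        · linarith
        · linarith [mul_pos hD ht']
      rw [hF, div_le_iff₀ hD]
      linarith [mul_comm t D]
end
end

section
/- Let v ∈ ℝⁿ satisfy 0 < ‖v‖ < 1 for the Euclidean norm, and let F be the Minkowski functional (gauge) of K = v + B̄(0,1), the translate by v of the closed Euclidean unit ball. Then F(v) = ‖v‖/(1+‖v‖) and F(−v) = ‖v‖/(1−‖v‖); in particular F(−v) ≠ F(v), so F is not the norm of any inner product on ℝⁿ. -/
open scoped Pointwise

noncomputable section

private lemma gauge_eq_of_forall {E : Type*} [AddCommGroup E] [Module ℝ E]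
    (s : Set E) (x : E) (a : ℝ) (ha : 0 < a)
    (h : ∀ t : ℝ, 0 < t → (x ∈ t • s ↔ a ≤ t)) :
    gauge s x = a := by
  have hset : {t : ℝ | 0 < t ∧ x ∈ t • s} = Set.Ici a := by
    ext t
    simp only [Set.mem_setOf_eq, Set.mem_Ici]
    constructor
    · rintro ⟨ht, hx⟩; exact (h t ht).1 hx
    · intro hat
      have ht := lt_of_lt_of_le ha hat
      exact ⟨ht, (h t ht).2 hat⟩
  rw [gauge, hset, csInf_Ici]

/-- for `0 < ‖v‖ < 1`, the gauge `F` of the translated ball `v + B̄(0,1)`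
satisfies `F(v) = ‖v‖/(1+‖v‖)` and `F(−v) = ‖v‖/(1−‖v‖)`; in particular `F(−v) ≠ F(v)`,
so `F` is not the norm of any inner product on ℝⁿ. -/
theorem gauge_translated_ball_irreversible
    (n : ℕ) (v : EuclideanSpace ℝ (Fin n)) (hv0 : 0 < ‖v‖) (hv : ‖v‖ < 1) :
    let F : EuclideanSpace ℝ (Fin n) → ℝ :=
      gauge (v +ᵥ Metric.closedBall (0 : EuclideanSpace ℝ (Fin n)) 1)
    F v = ‖v‖ / (1 + ‖v‖) ∧
    F (-v) = ‖v‖ / (1 - ‖v‖) ∧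
    F (-v) ≠ F v ∧
    ¬ ∃ g : EuclideanSpace ℝ (Fin n) →ₗ[ℝ] EuclideanSpace ℝ (Fin n) →ₗ[ℝ] ℝ,
        (∀ x y, g x y = g y x) ∧ (∀ x, x ≠ 0 → 0 < g x x) ∧
        ∀ ξ, F ξ = Real.sqrt (g ξ ξ) := by
  intro F
  set c := ‖v‖ with hc
  have hc1 : (0:ℝ) < 1 + c := by linarith
  have hc2 : (0:ℝ) < 1 - c := by linarith
  have hKball : (v +ᵥ Metric.closedBall (0 : EuclideanSpace ℝ (Fin n)) 1)
      = Metric.closedBall v 1 := by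
    rw [Metric.vadd_closedBall, vadd_eq_add, add_zero]
  have hmem : ∀ (y : EuclideanSpace ℝ (Fin n)) (t : ℝ), 0 < t →
      (y ∈ t • (v +ᵥ Metric.closedBall (0 : EuclideanSpace ℝ (Fin n)) 1) ↔
        ‖y - t • v‖ ≤ t) := by
    intro y t ht
    rw [hKball, smul_closedBall' ht.ne' v 1, Metric.mem_closedBall, dist_eq_norm,
      Real.norm_of_nonneg ht.le, mul_one]
  have h1 : F v = c / (1 + c) := by
    apply gauge_eq_of_forall _ _ _ (div_pos hv0 hc1)
    intro t ht
    rw [hmem v t ht]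
    have hnorm : ‖v - t • v‖ = |1 - t| * c := by
      rw [show v - t • v = (1 - t) • v by module, norm_smul, Real.norm_eq_abs, hc]
    rw [hnorm, div_le_iff₀ hc1]
    constructor
    · intro h
      rcases abs_cases (1 - t) with ⟨he, hs⟩ | ⟨he, hs⟩ <;> rw [he] at h <;> nlinarith
    · intro h
      rcases abs_cases (1 - t) with ⟨he, hs⟩ | ⟨he, hs⟩ <;> rw [he] <;> nlinarith
  have h2 : F (-v) = c / (1 - c) := by
    apply gauge_eq_of_forall _ _ _ (div_pos hv0 hc2)
    intro t ht
    rw [hmem (-v) t ht]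
    have hnorm : ‖-v - t • v‖ = (1 + t) * c := by
      rw [show -v - t • v = (-(1 + t)) • v by module, norm_smul, Real.norm_eq_abs,
        abs_neg, abs_of_pos (by linarith), hc]
    rw [hnorm, div_le_iff₀ hc2]
    constructor <;> intro h <;> nlinarith
  have hne : F (-v) ≠ F v := by
    rw [h1, h2]
    intro h
    rw [div_eq_div_iff hc2.ne' hc1.ne'] at h
    nlinarith
  refine ⟨h1, h2, hne, ?_⟩
  rintro ⟨g, hsymm, hpos, hF⟩
  apply hne
  rw [hF, hF]
  congr 1
  simp [map_neg]
end
end
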